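/- arXiv:0906.1861 — 2 statements merged into one kernel-verified Lean document; each statement's English description precedes it below -/
import Mathlib

section
/- Let a₁, a₂, b₁, b₂, c be complex numbers with Re(c − a₂ − b₂) > 0, with c, c − a₂ and c − b₂ not nonpositive integers, and let x be complex with |x| < 1. Then Appell's F₃ double series converges at (x, 1), and F₃(a₁, a₂; b₁, b₂; c; x, 1) = (Γ(c) Γ(c−a₂−b₂) / (Γ(c−a₂) Γ(c−b₂))) · ₃F₂(a₁, b₁, c−a₂−b₂; c−a₂, c−b₂; x). -/
/-- Pochhammer symbol `(z)_k = ∏_{i=0}^{k-1} (z + i)` for a complex number `z`. -/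
noncomputable def poch (z : ℂ) (k : ℕ) : ℂ := ∏ i ∈ Finset.range k, (z + i)

/-- Terms of Appell's `F₃` double series. -/
noncomputable def appellF3Term (a₁ a₂ b₁ b₂ c x y : ℂ) (p : ℕ × ℕ) : ℂ :=
  poch a₁ p.1 * poch a₂ p.2 * poch b₁ p.1 * poch b₂ p.2 /
    (poch c (p.1 + p.2) * (Nat.factorial p.1 : ℂ) * (Nat.factorial p.2 : ℂ)) *
    x ^ p.1 * y ^ p.2

/-- Appell's `F₃` double series. -/
noncomputable def appellF3 (a₁ a₂ b₁ b₂ c x y : ℂ) : ℂ :=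
  ∑' p : ℕ × ℕ, appellF3Term a₁ a₂ b₁ b₂ c x y p

/-- Generalized hypergeometric series `₃F₂(a₁,a₂,a₃; b₁,b₂; x)`. -/
noncomputable def hyp3F2 (a₁ a₂ a₃ b₁ b₂ x : ℂ) : ℂ :=
  ∑' k : ℕ, poch a₁ k * poch a₂ k * poch a₃ k /
    (poch b₁ k * poch b₂ k * (Nat.factorial k : ℂ)) * x ^ k

open Filter Finset Topology Complex




lemma poch_zero (z : ℂ) : poch z 0 = 1 := by simp [poch]
lemma poch_succ (z : ℂ) (k : ℕ) : poch z (k+1) = poch z k * (z + k) := by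
  simp [poch, Finset.prod_range_succ]
lemma poch_succ' (z : ℂ) (k : ℕ) : poch z (k+1) = z * poch (z+1) k := by
  rw [poch, Finset.prod_range_succ']
  simp only [Nat.cast_zero, add_zero, mul_comm]
  congr 1
  refine Finset.prod_congr rfl fun i _ => by push_cast; ring
lemma poch_add (z : ℂ) (i j : ℕ) : poch z (i+j) = poch z i * poch (z + i) j := by
  rw [poch, Finset.prod_range_add, ← poch]
  congr 1
  refine Finset.prod_congr rfl fun k _ => by push_cast; ring
lemma poch_ne_zero {z : ℂ} (h : ∀ k : ℕ, z + k ≠ 0) (n : ℕ) : poch z n ≠ 0 :=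
  Finset.prod_ne_zero_iff.2 fun k _ => h k
lemma norm_poch_le (z : ℂ) (n : ℕ) : ‖poch z n‖ ≤ ∏ i ∈ Finset.range n, (‖z‖ + i) := by
  rw [poch, norm_prod]
  refine Finset.prod_le_prod (fun i _ => norm_nonneg _) fun i _ => ?_
  calc ‖z + i‖ ≤ ‖z‖ + ‖(i:ℂ)‖ := norm_add_le _ _
    _ = ‖z‖ + i := by rw [Complex.norm_natCast]
lemma le_norm_poch {r : ℝ} {z : ℂ} (h0 : 0 ≤ r) (h : r ≤ z.re) (n : ℕ) :
    ∏ i ∈ Finset.range n, (r + i) ≤ ‖poch z n‖ := by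
  rw [poch, norm_prod]
  refine Finset.prod_le_prod (fun i _ => by positivity) fun i _ => ?_
  calc r + i ≤ (z + i).re := by simp [Complex.add_re]; linarith
    _ ≤ ‖z + i‖ := Complex.re_le_norm _

lemma ev_lin (A B : ℝ) (hA : 0 < A) : ∀ᶠ j : ℕ in atTop, 0 ≤ A * j + B := by
  filter_upwards [eventually_ge_atTop ⌈|B|/A⌉₊] with j hj
  have h1 : |B|/A ≤ (j:ℝ) := le_trans (Nat.le_ceil _) (by exact_mod_cast hj)
  have h2 : |B| ≤ A * j := by rwa [div_le_iff₀ hA, mul_comm] at h1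
  nlinarith [neg_abs_le B]

lemma ev_quad (A B C : ℝ) (hA : 0 < A) : ∀ᶠ j : ℕ in atTop, 0 ≤ A * j^2 + B * j + C := by
  filter_upwards [eventually_ge_atTop ⌈(|B|+|C|)/A⌉₊, eventually_ge_atTop 1] with j hj hj1
  have h1 : (|B|+|C|)/A ≤ (j:ℝ) := le_trans (Nat.le_ceil _) (by exact_mod_cast hj)
  have h2 : |B| + |C| ≤ A * j := by rwa [div_le_iff₀ hA, mul_comm] at h1
  have h3 : (1:ℝ) ≤ j := by exact_mod_cast hj1
  have h4 : (|B|+|C|) * j ≤ A * j * j := by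
    have := mul_le_mul_of_nonneg_right h2 (le_trans zero_le_one h3)
    linarith
  have j0 : (0:ℝ) ≤ j := by linarith
  have hB : -|B| * j ≤ B * j := mul_le_mul_of_nonneg_right (neg_abs_le B) j0
  have hC : -|C| ≤ C := neg_abs_le C
  have hCj : |C| * 1 ≤ |C| * j := mul_le_mul_of_nonneg_left h3 (abs_nonneg C)
  have hsq : A*(j:ℝ)^2 = A*j*j := by ring
  linarith

lemma ev_cubic (a b c a' b' c' : ℝ) (h : a + b + c < a' + b' + c') :
    ∀ᶠ j : ℕ in atTop, ((j:ℝ)+a)*((j:ℝ)+b)*((j:ℝ)+c) ≤ ((j:ℝ)+a')*((j:ℝ)+b')*((j:ℝ)+c') := by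
  filter_upwards [ev_quad (a'+b'+c' - (a+b+c)) (a'*b'+a'*c'+b'*c' - (a*b+a*c+b*c))
    (a'*b'*c' - a*b*c) (by linarith)] with j hj
  nlinarith [hj]

lemma ev_abs_le (a : ℂ) {d : ℝ} (hd : 0 < d) :
    ∀ᶠ j : ℕ in atTop, ‖a + j‖ ≤ (j:ℝ) + a.re + d := by
  filter_upwards [ev_lin (2*d) (2*d*a.re + d^2 - a.im^2) (by linarith),
    ev_lin 1 (a.re + d) one_pos] with j h1 h2
  have h3 : 0 ≤ (j:ℝ) + a.re + d := by linarith
  have h4 : ‖a + j‖ = Real.sqrt ((a.re + j)^2 + a.im^2) := by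
    rw [Complex.norm_def, Complex.normSq_apply]
    norm_num [Complex.add_re, Complex.add_im, Complex.natCast_re, Complex.natCast_im]
    ring_nf
  rw [h4]
  calc Real.sqrt ((a.re + j)^2 + a.im^2) ≤ Real.sqrt (((j:ℝ) + a.re + d)^2) := by
        apply Real.sqrt_le_sqrt; nlinarith
    _ = (j:ℝ) + a.re + d := Real.sqrt_sq h3

lemma ev_abs_cubic (a b c : ℂ) (p q r : ℝ) (h : a.re + b.re + p < c.re + q + r) :
    ∀ᶠ j : ℕ in atTop,
      ‖a + j‖ * ‖b + j‖ * ((j:ℝ) + p) ≤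
        ‖c + j‖ * (((j:ℝ) + q) * ((j:ℝ) + r)) := by
  set d : ℝ := (c.re + q + r - (a.re + b.re + p))/3 with hd
  have hdpos : 0 < d := by rw [hd]; linarith
  filter_upwards [ev_abs_le a hdpos, ev_abs_le b hdpos,
    ev_cubic (a.re + d) (b.re + d) p c.re q r (by rw [hd]; ring_nf; linarith),
    ev_lin 1 p one_pos, ev_lin 1 q one_pos, ev_lin 1 r one_pos,
    ev_lin 1 c.re one_pos, ev_lin 1 (a.re + d) one_pos, ev_lin 1 (b.re + d) one_pos]
    with j ha hb hcub hp hq hr hcre had hbd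
  have h1 : ‖a + j‖ * ‖b + j‖ * ((j:ℝ) + p) ≤
      ((j:ℝ) + (a.re + d)) * ((j:ℝ) + (b.re + d)) * ((j:ℝ) + p) := by
    have := norm_nonneg (a + j)
    have := norm_nonneg (b + j)
    have ha' : ‖a + j‖ ≤ (j:ℝ) + (a.re + d) := by linarith
    have hb' : ‖b + j‖ ≤ (j:ℝ) + (b.re + d) := by linarith
    have hp' : 0 ≤ (j:ℝ) + p := by linarith
    have := mul_le_mul ha' hb' (norm_nonneg _) (by linarith)
    exact mul_le_mul_of_nonneg_right this hp'
  have h2 : ((j:ℝ) + c.re) * (((j:ℝ) + q) * ((j:ℝ) + r)) ≤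
      ‖c + j‖ * (((j:ℝ) + q) * ((j:ℝ) + r)) := by
    have hre : (j:ℝ) + c.re ≤ ‖c + j‖ := by
      have := Complex.re_le_norm (c + j)
      simp only [Complex.add_re, Complex.natCast_re] at this
      linarith
    have : 0 ≤ ((j:ℝ) + q) * ((j:ℝ) + r) := by nlinarith
    nlinarith
  calc ‖a + j‖ * ‖b + j‖ * ((j:ℝ) + p)
      ≤ ((j:ℝ) + (a.re + d)) * ((j:ℝ) + (b.re + d)) * ((j:ℝ) + p) := h1
    _ ≤ ((j:ℝ) + c.re) * ((j:ℝ) + q) * ((j:ℝ) + r) := hcub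
    _ = ((j:ℝ) + c.re) * (((j:ℝ) + q) * ((j:ℝ) + r)) := by ring
    _ ≤ _ := h2

-- ratio comparison: bound lemma
lemma ratio_key {f : ℕ → ℂ} {g : ℕ → ℝ} (hgpos : ∀ j, 0 < g j) {N : ℕ}
    (h : ∀ j, N ≤ j → ‖f (j+1)‖ * g j ≤ ‖f j‖ * g (j+1)) :
    ∀ j, N ≤ j → ‖f j‖ ≤ ‖f N‖ / g N * g j := by
  intro j hj
  induction j, hj using Nat.le_induction with
  | base => rw [div_mul_cancel₀]; exact (hgpos N).ne'
  | succ n hn ih =>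
    have h1 := h n hn
    have h2 : ‖f (n+1)‖ ≤ ‖f n‖ * g (n+1) / g n := by
      rw [le_div_iff₀ (hgpos n)]; exact h1
    have h3 : ‖f (n+1)‖ * g n ≤ (‖f N‖ / g N * g (n+1)) * g n := by
      calc ‖f (n+1)‖ * g n ≤ ‖f n‖ * g (n+1) := h1
        _ ≤ (‖f N‖/g N * g n) * g (n+1) := mul_le_mul_of_nonneg_right ih (hgpos (n+1)).le
        _ = (‖f N‖/g N * g (n+1)) * g n := by ring
    exact le_of_mul_le_mul_right h3 (hgpos n)
  
lemma summable_norm_of_ratio {f : ℕ → ℂ} {g : ℕ → ℝ} (hg : Summable g)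
    (hgpos : ∀ j, 0 < g j)
    (h : ∀ᶠ j in atTop, ‖f (j+1)‖ * g j ≤ ‖f j‖ * g (j+1)) :
    Summable fun j => ‖f j‖ := by
  obtain ⟨N, hN⟩ := eventually_atTop.1 h
  have key := ratio_key hgpos hN
  apply Summable.of_norm_bounded_eventually_nat (g := fun j => ‖f N‖ / g N * g j) (hg.mul_left _)
  filter_upwards [eventually_ge_atTop N] with j hj
  rw [Real.norm_of_nonneg (norm_nonneg _)]
  exact key j hj

lemma tendsto_zero_of_ratio {f : ℕ → ℂ} {g : ℕ → ℝ} (hg0 : Tendsto g atTop (𝓝 0))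
    (hgpos : ∀ j, 0 < g j)
    (h : ∀ᶠ j in atTop, ‖f (j+1)‖ * g j ≤ ‖f j‖ * g (j+1)) :
    Tendsto f atTop (𝓝 0) := by
  obtain ⟨N, hN⟩ := eventually_atTop.1 h
  have key := ratio_key hgpos hN
  have hb : ∀ᶠ j in atTop, ‖f j‖ ≤ (fun j => ‖f N‖ / g N * g j) j := by
    filter_upwards [eventually_ge_atTop N] with j hj using key j hj
  exact squeeze_zero_norm' hb (by simpa using hg0.const_mul (‖f N‖ / g N))

-- the telescoping majorant
noncomputable def vr (β s : ℝ) (n : ℕ) : ℝ := ∏ k ∈ Finset.range n, (β + k)/(β + s + k)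

lemma vr_pos {β s : ℝ} (hβ : 0 < β) (hs : 0 < s) (n : ℕ) : 0 < vr β s n :=
  Finset.prod_pos fun k _ => div_pos (by positivity) (by positivity)

lemma vr_succ (β s : ℝ) (n : ℕ) : vr β s (n+1) = vr β s n * ((β + n)/(β + s + n)) := by
  rw [vr, vr, Finset.prod_range_succ]

noncomputable def wt (β s : ℝ) (n : ℕ) : ℝ := vr β s n * (s / (β + s + n))

lemma wt_pos {β s : ℝ} (hβ : 0 < β) (hs : 0 < s) (n : ℕ) : 0 < wt β s n :=
  mul_pos (vr_pos hβ hs n) (div_pos hs (by positivity))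

lemma wt_eq_sub {β s : ℝ} (hβ : 0 < β) (hs : 0 < s) (n : ℕ) :
    wt β s n = vr β s n - vr β s (n+1) := by
  rw [wt, vr_succ]
  have : β + s + (n:ℝ) ≠ 0 := by positivity
  field_simp
  ring

lemma wt_succ {β s : ℝ} (hβ : 0 < β) (hs : 0 < s) (n : ℕ) :
    wt β s (n+1) = wt β s n * ((β + n)/(β + s + 1 + n)) := by
  rw [wt, wt, vr_succ]
  have h1 : β + s + (n:ℝ) ≠ 0 := by positivity
  have h2 : β + s + ((n:ℝ)+1) ≠ 0 := by positivity
  have h3 : β + s + 1 + (n:ℝ) ≠ 0 := by positivity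
  push_cast
  field_simp
  ring

lemma wt_summable {β s : ℝ} (hβ : 0 < β) (hs : 0 < s) : Summable (wt β s) := by
  apply summable_of_sum_range_le (c := 1) (fun n => (wt_pos hβ hs n).le)
  intro n
  have : ∑ i ∈ Finset.range n, wt β s i = vr β s 0 - vr β s n := by
    rw [← Finset.sum_range_sub' (vr β s) n]
    exact Finset.sum_congr rfl fun i _ => wt_eq_sub hβ hs i
  rw [this]
  have h0 : vr β s 0 = 1 := by simp [vr]
  rw [h0]
  linarith [vr_pos hβ hs n]

lemma one_add_sum_le_prod (x : ℕ → ℝ) (hx : ∀ k, 0 ≤ x k) (n : ℕ) :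
    1 + ∑ k ∈ Finset.range n, x k ≤ ∏ k ∈ Finset.range n, (1 + x k) := by
  induction n with
  | zero => simp
  | succ n ih =>
    rw [Finset.sum_range_succ, Finset.prod_range_succ]
    have h1 : 0 ≤ ∑ k ∈ Finset.range n, x k := Finset.sum_nonneg fun k _ => hx k
    nlinarith [hx n]

lemma vr_tendsto_zero {β s : ℝ} (hβ : 0 < β) (hs : 0 < s) :
    Tendsto (vr β s) atTop (𝓝 0) := by
  have hH : Tendsto (fun n => 1 + s * ∑ k ∈ Finset.range n, 1/(β + k)) atTop atTop := by
    apply tendsto_atTop_add_const_left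
    apply Tendsto.const_mul_atTop hs
    have hcomp : ∀ n, (β+1)⁻¹ * ∑ i ∈ Finset.range n, 1/((i:ℝ)+1) ≤
        ∑ k ∈ Finset.range n, 1/(β + k) := by
      intro n
      rw [Finset.mul_sum]
      refine Finset.sum_le_sum fun i _ => ?_
      rw [mul_one_div, inv_eq_one_div, div_div]
      apply one_div_le_one_div_of_le (by positivity)
      nlinarith [i.cast_nonneg (α := ℝ)]
    exact tendsto_atTop_mono hcomp
      (Tendsto.const_mul_atTop (by positivity) Real.tendsto_sum_range_one_div_nat_succ_atTop)
  have hub : ∀ n, vr β s n ≤ (1 + s * ∑ k ∈ Finset.range n, 1/(β + k))⁻¹ := by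
    intro n
    have hvpos := vr_pos hβ hs n
    have hinv : (vr β s n)⁻¹ = ∏ k ∈ Finset.range n, (1 + s/(β + k)) := by
      rw [vr, ← Finset.prod_inv_distrib]
      refine Finset.prod_congr rfl fun k _ => ?_
      have h1 : β + (k:ℝ) ≠ 0 := by positivity
      have h2 : β + s + (k:ℝ) ≠ 0 := by positivity
      field_simp
      ring
    have hge : 1 + s * ∑ k ∈ Finset.range n, 1/(β + k) ≤ (vr β s n)⁻¹ := by
      rw [hinv, Finset.mul_sum]
      have := one_add_sum_le_prod (fun k => s/(β+k)) (fun k => by positivity) n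
      simp only [mul_one_div] at this ⊢
      convert this using 3 <;> simp [div_eq_mul_inv]
    calc vr β s n = ((vr β s n)⁻¹)⁻¹ := (inv_inv _).symm
      _ ≤ (1 + s * ∑ k ∈ Finset.range n, 1/(β + k))⁻¹ := by
          apply inv_anti₀ _ hge
          have : 0 ≤ s * ∑ k ∈ Finset.range n, 1/(β+k) := by
            apply mul_nonneg hs.le
            exact Finset.sum_nonneg fun k _ => by positivity
          linarith
  apply squeeze_zero (fun n => (vr_pos hβ hs n).le) hub
  exact (tendsto_inv_atTop_zero).comp hH

noncomputable def gaussTerm (a b c : ℂ) (j : ℕ) : ℂ :=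
  poch a j * poch b j / (poch c j * (Nat.factorial j : ℂ))

lemma gaussTerm_zero (a b c : ℂ) : gaussTerm a b c 0 = 1 := by
  simp [gaussTerm, poch]

lemma gaussTerm_succ (a b c : ℂ) (j : ℕ) :
    gaussTerm a b c (j+1) = gaussTerm a b c j * ((a+j)*(b+j) / ((c+j)*(j+1))) := by
  rw [gaussTerm, gaussTerm, poch_succ, poch_succ, poch_succ, Nat.factorial_succ]
  push_cast
  rw [div_mul_div_comm]
  ring_nf

lemma norm_gaussTerm_succ (a b c : ℂ) (j : ℕ) :
    ‖gaussTerm a b c (j+1)‖ =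
      ‖gaussTerm a b c j‖ * (‖a+j‖ * ‖b+j‖ /
        (‖c+j‖ * ((j:ℝ)+1))) := by
  have hj1 : ‖(j:ℂ)+1‖ = (j:ℝ)+1 := by
    rw [show ((j:ℂ)+1) = ((j+1:ℕ):ℂ) by push_cast; ring, Complex.norm_natCast]
    push_cast; ring
  rw [gaussTerm_succ, norm_mul, norm_div, norm_mul, norm_mul]
  simp only [hj1]

lemma re_sub_sub (a b c : ℂ) : (c - a - b).re = c.re - a.re - b.re := by
  simp [Complex.sub_re]

lemma gauss_norm_summable (a b c : ℂ) (hre : 0 < (c - a - b).re)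
    (hc : ∀ k : ℕ, c + (k:ℂ) ≠ 0) :
    Summable fun j => ‖gaussTerm a b c j‖ := by
  set s : ℝ := (c - a - b).re / 2 with hs
  have hspos : 0 < s := by positivity
  apply summable_norm_of_ratio (wt_summable one_pos hspos) (wt_pos one_pos hspos)
  have hcub := ev_abs_cubic a b c (s+2) 1 1
    (by rw [hs, re_sub_sub]; rw [re_sub_sub] at hre; linarith)
  filter_upwards [hcub] with j hj
  rw [norm_gaussTerm_succ, wt_succ one_pos hspos]
  have hC : 0 < ‖c + j‖ := by
    exact norm_pos_iff.2 (hc j)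
  have hfrac : ‖a+j‖ * ‖b+j‖ / (‖c+j‖ * ((j:ℝ)+1)) ≤
      (1 + j) / (1 + s + 1 + j) := by
    rw [div_le_div_iff₀ (by positivity) (by positivity)]
    calc ‖a+j‖ * ‖b+j‖ * (1 + s + 1 + (j:ℝ))
        = ‖a+j‖ * ‖b+j‖ * ((j:ℝ) + (s+2)) := by ring
      _ ≤ ‖c+j‖ * (((j:ℝ)+1) * ((j:ℝ)+1)) := hj
      _ = (1 + (j:ℝ)) * (‖c+j‖ * ((j:ℝ)+1)) := by ring
  calc ‖gaussTerm a b c j‖ * (‖a+j‖ * ‖b+j‖ /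
        (‖c+j‖ * ((j:ℝ)+1))) * wt 1 s j
      ≤ ‖gaussTerm a b c j‖ * ((1+j)/(1+s+1+j)) * wt 1 s j := by
        have h0 : (0:ℝ) ≤ ‖gaussTerm a b c j‖ := norm_nonneg _
        have h1 : (0:ℝ) < wt 1 s j := wt_pos one_pos hspos j
        apply mul_le_mul_of_nonneg_right _ h1.le
        exact mul_le_mul_of_nonneg_left hfrac h0
    _ = ‖gaussTerm a b c j‖ * (wt 1 s j * ((1+j)/(1+s+1+j))) := by ring

lemma gauss_B_tendsto (a b c : ℂ) (hre : 0 < (c - a - b).re)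
    (hc : ∀ k : ℕ, c + (k:ℂ) ≠ 0) :
    Tendsto (fun j : ℕ => (j:ℂ) * gaussTerm a b c j) atTop (𝓝 0) := by
  set s : ℝ := (c - a - b).re / 2 with hs
  have hspos : 0 < s := by positivity
  apply tendsto_zero_of_ratio (vr_tendsto_zero one_pos hspos) (vr_pos one_pos hspos)
  have hcub := ev_abs_cubic a b c (s+1) 0 1
    (by rw [hs, re_sub_sub]; rw [re_sub_sub] at hre; linarith)
  filter_upwards [hcub, eventually_ge_atTop 1] with j hj hj1
  have hC : 0 < ‖c + j‖ := by
    exact norm_pos_iff.2 (hc j)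
  have hjR : (1:ℝ) ≤ (j:ℝ) := by exact_mod_cast hj1
  have hB1 : ‖((j:ℂ)+1) * gaussTerm a b c (j+1)‖ =
      ‖gaussTerm a b c j‖ * (‖a+j‖ * ‖b+j‖ / ‖c+j‖) := by
    rw [norm_mul, norm_gaussTerm_succ]
    have : ‖((j:ℂ)+1)‖ = (j:ℝ)+1 := by
      rw [show ((j:ℂ)+1) = ((j+1:ℕ):ℂ) by push_cast; ring, Complex.norm_natCast]
      push_cast; ring
    rw [this]
    field_simp
  have hgoal : ‖gaussTerm a b c j‖ * (‖a+j‖ * ‖b+j‖ / ‖c+j‖)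
      * vr 1 s j ≤ (j:ℝ) * ‖gaussTerm a b c j‖ * (vr 1 s j * ((1+j)/(1+s+j))) := by
    have hfrac : ‖a+j‖ * ‖b+j‖ / ‖c+j‖ ≤
        (j:ℝ) * ((1+j)/(1+s+j)) := by
      rw [div_le_iff₀ hC, mul_comm ((j:ℝ)) _, div_mul_eq_mul_div, div_mul_eq_mul_div,
        le_div_iff₀ (by positivity)]
      calc ‖a+j‖ * ‖b+j‖ * (1 + s + (j:ℝ))
          = ‖a+j‖ * ‖b+j‖ * ((j:ℝ) + (s+1)) := by ring
        _ ≤ ‖c+j‖ * (((j:ℝ)+0) * ((j:ℝ)+1)) := hj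
        _ = (1+(j:ℝ)) * (j:ℝ) * ‖c+j‖ := by ring
    calc ‖gaussTerm a b c j‖ * (‖a+j‖ * ‖b+j‖ / ‖c+j‖)
          * vr 1 s j
        ≤ ‖gaussTerm a b c j‖ * ((j:ℝ) * ((1+j)/(1+s+j))) * vr 1 s j := by
          apply mul_le_mul_of_nonneg_right _ (vr_pos one_pos hspos j).le
          exact mul_le_mul_of_nonneg_left hfrac (norm_nonneg _)
      _ = (j:ℝ) * ‖gaussTerm a b c j‖ * (vr 1 s j * ((1+j)/(1+s+j))) := by ring
  calc ‖(((j+1:ℕ)):ℂ) * gaussTerm a b c (j+1)‖ * vr 1 s j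
      = ‖((j:ℂ)+1) * gaussTerm a b c (j+1)‖ * vr 1 s j := by norm_cast
    _ = ‖gaussTerm a b c j‖ * (‖a+j‖ * ‖b+j‖ / ‖c+j‖)
        * vr 1 s j := by rw [hB1]
    _ ≤ (j:ℝ) * ‖gaussTerm a b c j‖ * (vr 1 s j * ((1+j)/(1+s+j))) := hgoal
    _ = ‖(j:ℂ) * gaussTerm a b c j‖ * vr 1 s (j+1) := by
        rw [vr_succ, norm_mul, Complex.norm_natCast]
  

lemma summable_bound2 : Summable (fun j : ℕ => 2/(((j:ℝ)+1)*((j:ℝ)+2))) := by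
  have h1 : Summable (fun j : ℕ => 2 * (1/((j:ℝ)+1)^2)) := by
    apply Summable.mul_left
    have := (Real.summable_one_div_nat_pow (p := 2)).2 one_lt_two
    exact_mod_cast (summable_nat_add_iff 1).2 this
  apply Summable.of_nonneg_of_le (fun j => by positivity) _ h1
  intro j
  have h2 : 2/(((j:ℝ)+1)*((j:ℝ)+2)) ≤ 2/((j:ℝ)+1)^2 := by
    rw [div_le_div_iff₀ (by positivity) (by positivity)]
    nlinarith [j.cast_nonneg (α := ℝ)]
  calc 2/(((j:ℝ)+1)*((j:ℝ)+2)) ≤ 2/((j:ℝ)+1)^2 := h2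
    _ = 2 * (1/((j:ℝ)+1)^2) := by ring

lemma gauss_unif (a b c' : ℂ)
    (hc' : 1 + 4*(‖a‖ + ‖b‖) + 3*(‖a‖ * ‖b‖) ≤ c'.re)
    (j : ℕ) : ‖gaussTerm a b c' j‖ ≤ 2/(((j:ℝ)+1)*((j:ℝ)+2)) := by
  set A := ‖a‖ with hA
  set B := ‖b‖ with hB
  have hA0 : 0 ≤ A := norm_nonneg a
  have hB0 : 0 ≤ B := norm_nonneg b
  set R : ℝ := 1 + 4*(A+B) + 3*(A*B) with hR
  have hR1 : 1 ≤ R := by nlinarith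
  induction j with
  | zero => rw [gaussTerm_zero]; norm_num
  | succ j ih =>
    have hCre : R + (j:ℝ) ≤ (c' + j).re := by
      simp only [Complex.add_re, Complex.natCast_re]
      have := j.cast_nonneg (α := ℝ)
      linarith
    have hCpos : 0 < ‖c'+j‖ := by
      calc (0:ℝ) < R + j := by have := j.cast_nonneg (α := ℝ); linarith
        _ ≤ (c'+j).re := hCre
        _ ≤ ‖c'+j‖ := Complex.re_le_norm _
    have h1 : ‖a+j‖ ≤ A + j := by
      calc ‖a+j‖ ≤ A + ‖(j:ℂ)‖ := norm_add_le _ _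
        _ = A + j := by rw [Complex.norm_natCast]
    have h2 : ‖b+j‖ ≤ B + j := by
      calc ‖b+j‖ ≤ B + ‖(j:ℂ)‖ := norm_add_le _ _
        _ = B + j := by rw [Complex.norm_natCast]
    have h3 : R + (j:ℝ) ≤ ‖c'+j‖ := le_trans hCre (Complex.re_le_norm _)
    have hfrac : ‖a+j‖ * ‖b+j‖ /
        (‖c'+j‖ * ((j:ℝ)+1)) ≤ ((j:ℝ)+1)/((j:ℝ)+3) := by
      rw [div_le_div_iff₀ (by positivity) (by positivity)]
      have hj0 := j.cast_nonneg (α := ℝ)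
      have key : (A + j) * (B + j) * ((j:ℝ)+3) ≤ (R + j) * (((j:ℝ)+1) * ((j:ℝ)+1)) := by
        nlinarith [hR, mul_nonneg hA0 hB0, mul_nonneg (mul_nonneg hA0 hB0) hj0,
          mul_nonneg hA0 hj0, mul_nonneg hB0 hj0, mul_nonneg hj0 hj0,
          mul_nonneg (mul_nonneg hA0 hj0) hj0, mul_nonneg (mul_nonneg hB0 hj0) hj0]
      calc ‖a+j‖ * ‖b+j‖ * ((j:ℝ)+3)
          ≤ (A + j) * (B + j) * ((j:ℝ)+3) := by
            have hab1 : ‖a+j‖ * ‖b+j‖ ≤ (A+j)*(B+j) :=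
              mul_le_mul h1 h2 (norm_nonneg _) (by linarith)
            exact mul_le_mul_of_nonneg_right hab1 (by linarith)
        _ ≤ (R + j) * (((j:ℝ)+1) * ((j:ℝ)+1)) := key
        _ ≤ ‖c'+j‖ * (((j:ℝ)+1) * ((j:ℝ)+1)) := by
            apply mul_le_mul_of_nonneg_right h3 (by positivity)
        _ = ((j:ℝ)+1) * (‖c'+j‖ * ((j:ℝ)+1)) := by ring
    rw [norm_gaussTerm_succ]
    have hj0 := j.cast_nonneg (α := ℝ)
    calc ‖gaussTerm a b c' j‖ * (‖a+j‖ * ‖b+j‖ /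
          (‖c'+j‖ * ((j:ℝ)+1)))
        ≤ (2/(((j:ℝ)+1)*((j:ℝ)+2))) * (((j:ℝ)+1)/((j:ℝ)+3)) := by
          apply mul_le_mul ih hfrac (by positivity) (by positivity)
      _ = 2/(((j:ℝ)+2)*((j:ℝ)+3)) := by
          field_simp
      _ = 2/(((((j+1):ℕ):ℝ)+1)*((((j+1):ℕ):ℝ)+2)) := by push_cast; ring_nf
  

lemma le_prod_shift (r : ℝ) (hr : 1 ≤ r) (m : ℕ) :
    r ≤ ∏ i ∈ Finset.range (m+1), (r + i) := by
  induction m with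
  | zero => simp
  | succ m ih =>
    rw [Finset.prod_range_succ]
    have h1 : (0:ℝ) ≤ ((m+1:ℕ):ℝ) := Nat.cast_nonneg _
    nlinarith

lemma tendsto_inv_re_add_atTop (r : ℝ) : Tendsto (fun n : ℕ => (r + n)⁻¹) atTop (𝓝 0) := by
  apply Tendsto.comp tendsto_inv_atTop_zero
  apply tendsto_atTop_add_const_left
  exact tendsto_natCast_atTop_atTop

lemma gauss_tail (a b c : ℂ) :
    Tendsto (fun n : ℕ => ∑' j, gaussTerm a b (c + n) j) atTop (𝓝 1) := by
  have key := tendsto_tsum_of_dominated_convergence (𝓕 := atTop)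
    (f := fun (n : ℕ) (j : ℕ) => gaussTerm a b (c + n) j)
    (g := fun j => if j = 0 then (1:ℂ) else 0)
    (bound := fun j => 2/(((j:ℝ)+1)*((j:ℝ)+2))) summable_bound2 ?_ ?_
  · have : ∑' (j:ℕ), (if j = 0 then (1:ℂ) else 0) = 1 := by
      rw [tsum_eq_single 0]
      · simp
      · intro b' hb'; simp [hb']
    rwa [this] at key
  · intro j
    match j with
    | 0 => simpa [gaussTerm_zero] using tendsto_const_nhds
    | (m+1) =>
      simp only [if_neg (Nat.succ_ne_zero m)]
      refine squeeze_zero_norm'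
        (show ∀ᶠ n : ℕ in atTop, ‖gaussTerm a b (c + n) (m+1)‖ ≤
          (fun n : ℕ => (‖poch a (m+1) * poch b (m+1)‖) * (c.re + n)⁻¹) n from ?_) ?_
      · filter_upwards [eventually_ge_atTop (⌈1 - c.re⌉₊ + 1)] with n hn
        have hcn : 1 ≤ c.re + n := by
          have h1 : (1:ℝ) - c.re ≤ ⌈1 - c.re⌉₊ := Nat.le_ceil _
          have h2 : ((⌈1 - c.re⌉₊ + 1 : ℕ):ℝ) ≤ n := by exact_mod_cast hn
          push_cast at h2
          linarith
        have hre : (c + (n:ℂ)).re = c.re + n := by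
          simp [Complex.add_re, Complex.natCast_re]
        have hple : c.re + n ≤ ‖poch (c + n) (m+1)‖ := by
          have hlow := le_norm_poch (r := c.re + n) (by linarith) (le_of_eq hre.symm) (m+1)
          exact le_trans (le_prod_shift _ hcn m) hlow
        rw [gaussTerm, norm_div, norm_mul (poch (c+n) (m+1)) _, Complex.norm_natCast]
        have hfact : (1:ℝ) ≤ ((m+1).factorial : ℝ) := by
          exact_mod_cast Nat.one_le_iff_ne_zero.2 (Nat.factorial_ne_zero _)
        have hnum : (0:ℝ) ≤ ‖poch a (m+1) * poch b (m+1)‖ := norm_nonneg _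
        have hple' : (0:ℝ) < ‖poch (c + n) (m+1)‖ := by linarith
        have hD : c.re + n ≤ ‖poch (c+n) (m+1)‖ * (((m+1).factorial : ℕ):ℝ) := by
          nlinarith
        calc ‖poch a (m+1) * poch b (m+1)‖ /
              (‖poch (c+n) (m+1)‖ * (((m+1).factorial : ℕ):ℝ))
            ≤ ‖poch a (m+1) * poch b (m+1)‖ / (c.re + n) := by
              apply div_le_div_of_nonneg_left hnum (by linarith) hD
          _ = ‖poch a (m+1) * poch b (m+1)‖ * (c.re + n)⁻¹ := by rw [div_eq_mul_inv]
      · simpa using (tendsto_inv_re_add_atTop c.re).const_mul (‖poch a (m+1) * poch b (m+1)‖)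
  · set R : ℝ := 1 + 4*(‖a‖ + ‖b‖) + 3*(‖a‖ * ‖b‖)
      with hRdef
    filter_upwards [eventually_ge_atTop (⌈R - c.re⌉₊ + 1)] with n hn j
    apply gauss_unif
    have h1 : R - c.re ≤ ⌈R - c.re⌉₊ := Nat.le_ceil _
    have h2 : ((⌈R - c.re⌉₊ + 1 : ℕ):ℝ) ≤ n := by exact_mod_cast hn
    push_cast at h2
    simp only [Complex.add_re, Complex.natCast_re]
    rw [← hRdef]
    linarith

lemma gauss_identity (a b c : ℂ) (hcj : ∀ k : ℕ, c + (k:ℂ) ≠ 0) (j : ℕ) :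
    c*(c-a-b) * gaussTerm a b c j - (c-a)*(c-b) * gaussTerm a b (c+1) j
      = c * ((j:ℂ) * gaussTerm a b c j) - c * (((j+1:ℕ):ℂ) * gaussTerm a b c (j+1)) := by
  have hc' : c ≠ 0 := by simpa using hcj 0
  have hpc : poch c j ≠ 0 := poch_ne_zero hcj j
  have hcj' : c + (j:ℂ) ≠ 0 := hcj j
  have hfj : ((Nat.factorial j : ℕ):ℂ) ≠ 0 := by
    exact_mod_cast Nat.cast_ne_zero.2 (Nat.factorial_ne_zero j)
  have hrel : poch (c+1) j = poch c j * (c+j) / c := by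
    rw [eq_div_iff hc']
    have h1 := poch_succ' c j
    have h2 := poch_succ c j
    linear_combination h2 - h1
  have hj1 : (j:ℂ) + 1 ≠ 0 := by
    have := Nat.cast_ne_zero (R := ℂ).2 (Nat.succ_ne_zero j)
    push_cast at this
    exact this
  have hshift : gaussTerm a b (c+1) j = gaussTerm a b c j * (c/(c+j)) := by
    rw [gaussTerm, gaussTerm, hrel]
    field_simp
  rw [hshift, gaussTerm_succ]
  push_cast
  field_simp
  ring

lemma gauss_step (a b c : ℂ) (hre : 0 < (c - a - b).re) (hc : ∀ k : ℕ, c + (k:ℂ) ≠ 0) :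
    c * (c - a - b) * ∑' j, gaussTerm a b c j
      = (c - a) * (c - b) * ∑' j, gaussTerm a b (c+1) j := by
  have hre1 : 0 < (c + 1 - a - b).re := by
    rw [re_sub_sub] at hre ⊢
    simp only [Complex.add_re, Complex.one_re]
    linarith
  have hc1 : ∀ k : ℕ, (c + 1) + (k:ℂ) ≠ 0 := by
    intro k h
    apply hc (k+1)
    push_cast
    linear_combination h
  have hS1 : Summable (gaussTerm a b c) := (gauss_norm_summable a b c hre hc).of_norm
  have hS2 : Summable (gaussTerm a b (c+1)) := (gauss_norm_summable a b (c+1) hre1 hc1).of_norm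
  set f : ℕ → ℂ := fun j => c*(c-a-b) * gaussTerm a b c j - (c-a)*(c-b) * gaussTerm a b (c+1) j
    with hf
  have hdiff : Summable f := (hS1.mul_left _).sub (hS2.mul_left _)
  have htsum := hdiff.hasSum.tendsto_sum_nat
  have hpart : ∀ n, ∑ j ∈ Finset.range n, f j
      = - (c * ((n:ℂ) * gaussTerm a b c n)) := by
    intro n
    rw [Finset.sum_congr rfl (fun j _ => gauss_identity a b c hc j)]
    have := Finset.sum_range_sub' (fun j => c * ((j:ℂ) * gaussTerm a b c j)) n
    simpa using this
  have hlim0 : Tendsto (fun n : ℕ => ∑ j ∈ Finset.range n, f j) atTop (𝓝 0) := by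
    rw [show (0:ℂ) = -(c * 0) by ring]
    apply Tendsto.congr (fun n => (hpart n).symm)
    exact ((gauss_B_tendsto a b c hre hc).const_mul c).neg
  have h0 : ∑' j, f j = 0 := tendsto_nhds_unique htsum hlim0
  rw [hf, Summable.tsum_sub (hS1.mul_left _) (hS2.mul_left _), sub_eq_zero,
    tsum_mul_left, tsum_mul_left] at h0
  exact h0

lemma tendsto_inv_add_natCast (z : ℂ) :
    Tendsto (fun n : ℕ => (z + n)⁻¹) atTop (𝓝 0) := by
  rw [tendsto_zero_iff_norm_tendsto_zero]
  refine squeeze_zero_norm'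
    (show ∀ᶠ n : ℕ in atTop, ‖‖(z + (n:ℂ))⁻¹‖‖ ≤ (fun n : ℕ => (z.re + n)⁻¹) n from ?_) ?_
  · filter_upwards [eventually_ge_atTop (⌈1 - z.re⌉₊ + 1)] with n hn
    have hzn : 1 ≤ z.re + n := by
      have h1 : (1:ℝ) - z.re ≤ ⌈1 - z.re⌉₊ := Nat.le_ceil _
      have h2 : ((⌈1 - z.re⌉₊ + 1 : ℕ):ℝ) ≤ n := by exact_mod_cast hn
      push_cast at h2
      linarith
    have habs : z.re + n ≤ ‖z + n‖ := by
      have := Complex.re_le_norm (z + n)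
      simp only [Complex.add_re, Complex.natCast_re] at *
      linarith
    rw [norm_norm, norm_inv]
    exact inv_anti₀ (by linarith) habs
  · exact tendsto_inv_re_add_atTop z.re

lemma gauss_iterate (a b c : ℂ) (hre : 0 < (c - a - b).re) (hc : ∀ k : ℕ, c + (k:ℂ) ≠ 0) :
    ∀ n : ℕ, poch c n * poch (c-a-b) n * ∑' j, gaussTerm a b c j
      = poch (c-a) n * poch (c-b) n * ∑' j, gaussTerm a b (c + n) j := by
  intro n
  induction n with
  | zero => simp [poch]
  | succ n ih =>
    have hre_n : 0 < ((c + n) - a - b).re := by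
      rw [re_sub_sub] at hre ⊢
      simp only [Complex.add_re, Complex.natCast_re]
      have := n.cast_nonneg (α := ℝ)
      linarith
    have hc_n : ∀ k : ℕ, (c + n) + (k:ℂ) ≠ 0 := by
      intro k h
      apply hc (n + k)
      push_cast
      linear_combination h
    have step := gauss_step a b (c + n) hre_n hc_n
    have hcast : (((n+1):ℕ):ℂ) = (n:ℂ) + 1 := by push_cast; ring
    rw [hcast, show c + ((n:ℂ) + 1) = (c + n) + 1 by ring]
    rw [poch_succ, poch_succ, poch_succ, poch_succ]
    linear_combination ((c + (n:ℂ)) * (c - a - b + n)) * ih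
      + (poch (c-a) n * poch (c-b) n) * step

theorem gauss_sum (a b c : ℂ) (hre : 0 < (c - a - b).re) (hc : ∀ k : ℕ, c + (k:ℂ) ≠ 0)
    (hca : ∀ k : ℕ, c - a + (k:ℂ) ≠ 0) (hcb : ∀ k : ℕ, c - b + (k:ℂ) ≠ 0) :
    ∑' j, gaussTerm a b c j =
      Complex.Gamma c * Complex.Gamma (c-a-b) /
        (Complex.Gamma (c-a) * Complex.Gamma (c-b)) := by
  have hcab : ∀ k : ℕ, c - a - b + (k:ℂ) ≠ 0 := by
    intro k h
    have h1 : (c - a - b + (k:ℂ)).re = 0 := by rw [h]; simp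
    rw [Complex.add_re, Complex.natCast_re] at h1
    have := k.cast_nonneg (α := ℝ)
    linarith
  have hΓca : Complex.Gamma (c-a) ≠ 0 := by
    apply Complex.Gamma_ne_zero
    intro m h
    exact hca m (by rw [h]; ring)
  have hΓcb : Complex.Gamma (c-b) ≠ 0 := by
    apply Complex.Gamma_ne_zero
    intro m h
    exact hcb m (by rw [h]; ring)
  set S := ∑' j, gaussTerm a b c j with hS
  set L := Complex.Gamma c * Complex.Gamma (c-a-b) /
    (Complex.Gamma (c-a) * Complex.Gamma (c-b)) with hL
  -- the key algebraic identity for n ≥ 1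
  have key : ∀ n : ℕ, 1 ≤ n →
      poch (c-a) n * poch (c-b) n / (poch c n * poch (c-a-b) n)
        = (Complex.GammaSeq c n * Complex.GammaSeq (c-a-b) n /
            (Complex.GammaSeq (c-a) n * Complex.GammaSeq (c-b) n)) *
          ((c + n) * ((c-a-b) + n) / (((c-a) + n) * ((c-b) + n))) := by
    intro n hn
    have hn0 : (n:ℂ) ≠ 0 := Nat.cast_ne_zero.2 (by omega)
    have hfact : ((n.factorial : ℕ):ℂ) ≠ 0 := Nat.cast_ne_zero.2 n.factorial_ne_zero
    have hGS : ∀ z : ℂ, (∀ k : ℕ, z + (k:ℂ) ≠ 0) →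
        Complex.GammaSeq z n ≠ 0 ∧
          poch z (n+1) = (n:ℂ)^z * (n.factorial : ℂ) / Complex.GammaSeq z n := by
      intro z hz
      have hp : poch z (n+1) ≠ 0 := poch_ne_zero hz (n+1)
      have hdef : Complex.GammaSeq z n = (n:ℂ)^z * (n.factorial : ℂ) / poch z (n+1) := rfl
      have hpow : (n:ℂ)^z ≠ 0 := by
        rw [Ne, Complex.cpow_eq_zero_iff]
        push_neg
        intro h
        exact absurd h hn0
      refine ⟨by rw [hdef]; exact div_ne_zero (mul_ne_zero hpow hfact) hp, ?_⟩
      rw [hdef]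
      field_simp
    obtain ⟨hGa, hpa⟩ := hGS (c-a) hca
    obtain ⟨hGb, hpb⟩ := hGS (c-b) hcb
    obtain ⟨hGc, hpc⟩ := hGS c hc
    obtain ⟨hGd, hpd⟩ := hGS (c-a-b) hcab
    have hpow2 : (n:ℂ)^(c-a) * (n:ℂ)^(c-b) = (n:ℂ)^c * (n:ℂ)^(c-a-b) := by
      rw [← Complex.cpow_add _ _ hn0, ← Complex.cpow_add _ _ hn0]
      ring_nf
    have e1 : poch (c-a) n = poch (c-a) (n+1) / ((c-a) + n) := by
      rw [poch_succ, mul_div_cancel_right₀ _ (hca n)]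
    have e2 : poch (c-b) n = poch (c-b) (n+1) / ((c-b) + n) := by
      rw [poch_succ, mul_div_cancel_right₀ _ (hcb n)]
    have e3 : poch c n = poch c (n+1) / (c + n) := by
      rw [poch_succ, mul_div_cancel_right₀ _ (hc n)]
    have e4 : poch (c-a-b) n = poch (c-a-b) (n+1) / ((c-a-b) + n) := by
      rw [poch_succ, mul_div_cancel_right₀ _ (hcab n)]
    have step1 : poch (c-a) n * poch (c-b) n / (poch c n * poch (c-a-b) n)
        = (poch (c-a) (n+1) * poch (c-b) (n+1) / (poch c (n+1) * poch (c-a-b) (n+1))) *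
          ((c + n) * ((c-a-b) + n) / (((c-a) + n) * ((c-b) + n))) := by
      have h1 := hca n
      have h2 := hcb n
      have h3 := hc n
      have h4 := hcab n
      have hPc : poch c (n+1) ≠ 0 := poch_ne_zero hc (n+1)
      have hPd : poch (c-a-b) (n+1) ≠ 0 := poch_ne_zero hcab (n+1)
      rw [e1, e2, e3, e4]
      field_simp
      try ring
      try exact Or.inl trivial
    have hFF : (n:ℂ)^(c-a) * (n.factorial : ℂ) * ((n:ℂ)^(c-b) * (n.factorial : ℂ))
        = (n:ℂ)^c * (n.factorial : ℂ) * ((n:ℂ)^(c-a-b) * (n.factorial : ℂ)) := by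
      linear_combination ((n.factorial : ℂ))^2 * hpow2
    have hnz : (n:ℂ)^c * (n.factorial : ℂ) * ((n:ℂ)^(c-a-b) * (n.factorial : ℂ)) ≠ 0 := by
      have hpowc : (n:ℂ)^c ≠ 0 := by
        rw [Ne, Complex.cpow_eq_zero_iff]; push_neg; intro h; exact absurd h hn0
      have hpowd : (n:ℂ)^(c-a-b) ≠ 0 := by
        rw [Ne, Complex.cpow_eq_zero_iff]; push_neg; intro h; exact absurd h hn0
      exact mul_ne_zero (mul_ne_zero hpowc hfact) (mul_ne_zero hpowd hfact)
    have step2 : poch (c-a) (n+1) * poch (c-b) (n+1) / (poch c (n+1) * poch (c-a-b) (n+1))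
        = Complex.GammaSeq c n * Complex.GammaSeq (c-a-b) n /
            (Complex.GammaSeq (c-a) n * Complex.GammaSeq (c-b) n) := by
      rw [hpa, hpb, hpc, hpd, div_mul_div_comm, div_mul_div_comm, div_div_div_comm, hFF,
        div_self hnz, one_div, inv_div]
    rw [step1, step2]
  -- limits
  have hGSlim : Tendsto (fun n => Complex.GammaSeq c n * Complex.GammaSeq (c-a-b) n /
      (Complex.GammaSeq (c-a) n * Complex.GammaSeq (c-b) n)) atTop (𝓝 L) :=
    ((Complex.GammaSeq_tendsto_Gamma c).mul
      (Complex.GammaSeq_tendsto_Gamma (c-a-b))).div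
      ((Complex.GammaSeq_tendsto_Gamma (c-a)).mul
        (Complex.GammaSeq_tendsto_Gamma (c-b))) (mul_ne_zero hΓca hΓcb)
  have hratio : Tendsto (fun n : ℕ => (c + n) * ((c-a-b) + n) /
      (((c-a) + n) * ((c-b) + n))) atTop (𝓝 1) := by
    have t1 : Tendsto (fun n : ℕ => (c + n) / ((c-a) + n)) atTop (𝓝 1) := by
      have : ∀ n : ℕ, (c + n) / ((c-a) + n) = 1 + a * ((c-a) + n)⁻¹ := by
        intro n
        rw [div_eq_iff (hca n), add_mul, one_mul, mul_assoc, inv_mul_cancel₀ (hca n)]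
        ring
      rw [show (1:ℂ) = 1 + a * 0 by ring]
      exact Tendsto.congr (fun n => (this n).symm)
        (tendsto_const_nhds.add ((tendsto_inv_add_natCast (c-a)).const_mul a))
    have t2 : Tendsto (fun n : ℕ => ((c-a-b) + n) / ((c-b) + n)) atTop (𝓝 1) := by
      have : ∀ n : ℕ, ((c-a-b) + n) / ((c-b) + n) = 1 + (-a) * ((c-b) + n)⁻¹ := by
        intro n
        rw [div_eq_iff (hcb n), add_mul, one_mul, mul_assoc, inv_mul_cancel₀ (hcb n)]
        ring
      rw [show (1:ℂ) = 1 + (-a) * 0 by ring]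
      exact Tendsto.congr (fun n => (this n).symm)
        (tendsto_const_nhds.add ((tendsto_inv_add_natCast (c-b)).const_mul (-a)))
    have heq : ∀ n : ℕ, (c + n) / ((c-a) + n) * (((c-a-b) + n) / ((c-b) + n))
        = (c + n) * ((c-a-b) + n) / (((c-a) + n) * ((c-b) + n)) := by
      intro n
      rw [div_mul_div_comm]
    rw [show (1:ℂ) = 1 * 1 by ring]
    exact Tendsto.congr heq (t1.mul t2)
  -- assemble
  have hSn : ∀ n : ℕ, S = (poch (c-a) n * poch (c-b) n / (poch c n * poch (c-a-b) n)) *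
      ∑' j, gaussTerm a b (c + n) j := by
    intro n
    have hR0 : poch c n * poch (c-a-b) n ≠ 0 :=
      mul_ne_zero (poch_ne_zero hc n) (poch_ne_zero hcab n)
    rw [div_mul_eq_mul_div, eq_div_iff hR0]
    have := gauss_iterate a b c hre hc n
    rw [← hS] at this
    linear_combination this
  have hQlim : Tendsto (fun n : ℕ => poch (c-a) n * poch (c-b) n /
      (poch c n * poch (c-a-b) n)) atTop (𝓝 (L * 1)) := by
    apply Tendsto.congr' _ (hGSlim.mul hratio)
    filter_upwards [eventually_ge_atTop 1] with n hn
    exact (key n hn).symm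
  have hfinal : Tendsto (fun _ : ℕ => S) atTop (𝓝 ((L * 1) * 1)) :=
    Tendsto.congr (fun n => (hSn n).symm) (hQlim.mul (gauss_tail a b c))
  have := tendsto_nhds_unique tendsto_const_nhds hfinal
  rw [this]
  ring

lemma Gamma_shift (z : ℂ) (h : ∀ k : ℕ, z + (k:ℂ) ≠ 0) (n : ℕ) :
    Complex.Gamma (z + n) = poch z n * Complex.Gamma z := by
  induction n with
  | zero => simp [poch]
  | succ n ih =>
    have hzn : z + (n:ℂ) ≠ 0 := h n
    rw [show z + ((n+1:ℕ):ℂ) = (z + n) + 1 by push_cast; ring,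
      Complex.Gamma_add_one _ hzn, ih, poch_succ]
    ring


noncomputable def uu (a₁ b₁ c x : ℂ) (i : ℕ) : ℂ :=
  poch a₁ i * poch b₁ i * x^i / (poch c i * (Nat.factorial i : ℂ))

lemma uu_succ (a₁ b₁ c x : ℂ) (i : ℕ) :
    uu a₁ b₁ c x (i+1) = uu a₁ b₁ c x i * ((a₁+i)*(b₁+i)*x/((c+i)*((i:ℂ)+1))) := by
  rw [uu, uu, poch_succ, poch_succ, poch_succ, Nat.factorial_succ, pow_succ]
  push_cast
  rw [div_mul_div_comm]
  ring_nf

lemma uu_norm_summable (a₁ b₁ c x : ℂ) (hx : ‖x‖ < 1)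
    (hc : ∀ k : ℕ, c + (k:ℂ) ≠ 0) :
    Summable fun i => ‖uu a₁ b₁ c x i‖ := by
  set r : ℝ := (‖x‖ + 1)/2 with hr
  have hr1 : r < 1 := by rw [hr]; linarith
  have hxr : ‖x‖ < r := by rw [hr]; linarith
  apply summable_of_ratio_norm_eventually_le hr1
  have hone : ∀ i : ℕ, ((i:ℂ)+1) ≠ 0 := by
    intro i
    have := Nat.cast_ne_zero (R := ℂ).2 (Nat.succ_ne_zero i)
    push_cast at this
    exact this
  have heq : ∀ i : ℕ, (a₁+i)*(b₁+i)*x/((c+i)*((i:ℂ)+1))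
      = x * (1 + (a₁-1)*((1:ℂ)+i)⁻¹) * (1 + (b₁-c)*(c+i)⁻¹) := by
    intro i
    have h1 : ((1:ℂ)+i) ≠ 0 := by
      have := hone i
      intro h
      exact this (by linear_combination h)
    have h2 : c + (i:ℂ) ≠ 0 := hc i
    have e1 : 1 + (a₁-1)*((1:ℂ)+i)⁻¹ = (a₁+i)/(1+i) := by
      rw [eq_div_iff h1, add_mul, one_mul, mul_assoc, inv_mul_cancel₀ h1]
      ring
    have e2 : 1 + (b₁-c)*(c+(i:ℂ))⁻¹ = (b₁+i)/(c+i) := by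
      rw [eq_div_iff h2, add_mul, one_mul, mul_assoc, inv_mul_cancel₀ h2]
      ring
    rw [e1, e2, mul_div_assoc' x _ _, div_mul_div_comm,
      div_eq_div_iff (mul_ne_zero h2 (hone i)) (mul_ne_zero h1 h2)]
    ring
  have hlim : Tendsto (fun i : ℕ => (a₁+i)*(b₁+i)*x/((c+i)*((i:ℂ)+1))) atTop (𝓝 x) := by
    have hlim' : Tendsto (fun i : ℕ => x * (1 + (a₁-1)*((1:ℂ)+i)⁻¹) * (1 + (b₁-c)*(c+(i:ℂ))⁻¹))
        atTop (𝓝 (x * (1 + (a₁-1)*0) * (1 + (b₁-c)*0))) := by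
      refine Tendsto.mul (Tendsto.mul tendsto_const_nhds ?_) ?_
      · exact tendsto_const_nhds.add ((tendsto_inv_add_natCast 1).const_mul _)
      · exact tendsto_const_nhds.add ((tendsto_inv_add_natCast c).const_mul _)
    have hval : x * (1 + (a₁-1)*0) * (1 + (b₁-c)*0) = x := by ring
    rw [hval] at hlim'
    exact Tendsto.congr (fun i => (heq i).symm) hlim'
  have hev : ∀ᶠ i : ℕ in atTop, ‖(a₁+i)*(b₁+i)*x/((c+i)*((i:ℂ)+1))‖ ≤ r := by
    have := hlim.norm
    filter_upwards [this.eventually_lt_const hxr] with i hi using hi.le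
  filter_upwards [hev] with i hi
  rw [Real.norm_of_nonneg (norm_nonneg _), Real.norm_of_nonneg (norm_nonneg _),
    uu_succ, norm_mul]
  calc ‖uu a₁ b₁ c x i‖ * ‖(a₁+i)*(b₁+i)*x/((c+i)*((i:ℂ)+1))‖
      ≤ ‖uu a₁ b₁ c x i‖ * r := mul_le_mul_of_nonneg_left hi (norm_nonneg _)
    _ = r * ‖uu a₁ b₁ c x i‖ := by ring

theorem stmt_9 (a₁ a₂ b₁ b₂ c x : ℂ) (hre : 0 < (c - a₂ - b₂).re)
    (hc : ∀ k : ℕ, c ≠ -(k : ℂ)) (hca : ∀ k : ℕ, c - a₂ ≠ -(k : ℂ))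
    (hcb : ∀ k : ℕ, c - b₂ ≠ -(k : ℂ)) (hx : ‖x‖ < 1) :
    Summable (appellF3Term a₁ a₂ b₁ b₂ c x 1) ∧
    appellF3 a₁ a₂ b₁ b₂ c x 1 =
      Complex.Gamma c * Complex.Gamma (c - a₂ - b₂) /
        (Complex.Gamma (c - a₂) * Complex.Gamma (c - b₂)) *
        hyp3F2 a₁ b₁ (c - a₂ - b₂) (c - a₂) (c - b₂) x := by
  have hc' : ∀ k : ℕ, c + (k:ℂ) ≠ 0 := fun k h => hc k (by linear_combination h)
  have hca' : ∀ k : ℕ, (c - a₂) + (k:ℂ) ≠ 0 := fun k h => hca k (by linear_combination h)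
  have hcb' : ∀ k : ℕ, (c - b₂) + (k:ℂ) ≠ 0 := fun k h => hcb k (by linear_combination h)
  have hcab' : ∀ k : ℕ, (c - a₂ - b₂) + (k:ℂ) ≠ 0 := by
    intro k h
    have h1 : ((c - a₂ - b₂) + (k:ℂ)).re = 0 := by rw [h]; simp
    rw [Complex.add_re, Complex.natCast_re] at h1
    have := k.cast_nonneg (α := ℝ)
    linarith
  have hre_i : ∀ i : ℕ, 0 < ((c + i) - a₂ - b₂).re := by
    intro i
    rw [re_sub_sub] at hre ⊢
    simp only [Complex.add_re, Complex.natCast_re]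
    have := i.cast_nonneg (α := ℝ)
    linarith
  have hc_i : ∀ i k : ℕ, (c + i) + (k:ℂ) ≠ 0 := fun i k h =>
    hc' (i+k) (by push_cast; linear_combination h)
  have hca_i : ∀ i k : ℕ, (c + i) - a₂ + (k:ℂ) ≠ 0 := fun i k h =>
    hca' (i+k) (by push_cast; linear_combination h)
  have hcb_i : ∀ i k : ℕ, (c + i) - b₂ + (k:ℂ) ≠ 0 := fun i k h =>
    hcb' (i+k) (by push_cast; linear_combination h)
  have hrow : ∀ i : ℕ, Summable (fun j => ‖gaussTerm a₂ b₂ (c + i) j‖) := fun i =>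
    gauss_norm_summable _ _ _ (hre_i i) (hc_i i)
  have hval : ∀ i : ℕ, ∑' j, gaussTerm a₂ b₂ (c + i) j
      = Complex.Gamma (c+i) * Complex.Gamma ((c+i) - a₂ - b₂) /
        (Complex.Gamma ((c+i) - a₂) * Complex.Gamma ((c+i) - b₂)) :=
    fun i => gauss_sum a₂ b₂ (c+i) (hre_i i) (hc_i i) (hca_i i) (hcb_i i)
  have hterm : ∀ p : ℕ × ℕ, appellF3Term a₁ a₂ b₁ b₂ c x 1 p
      = uu a₁ b₁ c x p.1 * gaussTerm a₂ b₂ (c + p.1) p.2 := by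
    intro p
    rw [appellF3Term, uu, gaussTerm, poch_add]
    rw [one_pow, mul_one, div_mul_div_comm]
    ring
  have hterm' : ∀ i j : ℕ, appellF3Term a₁ a₂ b₁ b₂ c x 1 (i, j)
      = uu a₁ b₁ c x i * gaussTerm a₂ b₂ (c + i) j := fun i j => hterm (i,j)
  have hu := uu_norm_summable a₁ b₁ c x hx hc'
  set K : ℝ := ∑' j : ℕ, 2/(((j:ℝ)+1)*((j:ℝ)+2)) with hK
  set R : ℝ := 1 + 4*(‖a₂‖ + ‖b₂‖) +
    3*(‖a₂‖ * ‖b₂‖) with hRd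
  have hNS : ∀ᶠ i : ℕ in atTop, ∑' j, ‖gaussTerm a₂ b₂ (c + i) j‖ ≤ K := by
    filter_upwards [eventually_ge_atTop (⌈R - c.re⌉₊ + 1)] with i hi
    have hcre : R ≤ (c + (i:ℂ)).re := by
      have h1 : R - c.re ≤ ⌈R - c.re⌉₊ := Nat.le_ceil _
      have h2 : ((⌈R - c.re⌉₊ + 1 : ℕ):ℝ) ≤ i := by exact_mod_cast hi
      push_cast at h2
      simp only [Complex.add_re, Complex.natCast_re]
      linarith
    rw [hRd] at hcre
    exact Summable.tsum_le_tsum (fun j => gauss_unif a₂ b₂ _ hcre j) (hrow i) summable_bound2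
  have habs : Summable (fun p : ℕ × ℕ => ‖appellF3Term a₁ a₂ b₁ b₂ c x 1 p‖) := by
    rw [summable_prod_of_nonneg (fun p => norm_nonneg _)]
    constructor
    · intro i
      apply Summable.congr ((hrow i).mul_left ‖uu a₁ b₁ c x i‖)
      intro j
      rw [hterm' i j, norm_mul]
    · apply Summable.of_norm_bounded_eventually_nat (g := fun i => ‖uu a₁ b₁ c x i‖ * K)
        (hu.mul_right K)
      filter_upwards [hNS] with i hi
      have hrs : ∑' j, ‖appellF3Term a₁ a₂ b₁ b₂ c x 1 (i, j)‖
          = ‖uu a₁ b₁ c x i‖ * ∑' j, ‖gaussTerm a₂ b₂ (c+i) j‖ := by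
        rw [tsum_congr (fun j => by rw [hterm' i j, norm_mul]), tsum_mul_left]
      rw [Real.norm_of_nonneg (tsum_nonneg fun j => norm_nonneg _), hrs]
      exact mul_le_mul_of_nonneg_left hi (norm_nonneg _)
  have hsum : Summable (appellF3Term a₁ a₂ b₁ b₂ c x 1) := habs.of_norm
  refine ⟨hsum, ?_⟩
  have hrowsum : ∀ i : ℕ, Summable fun j => appellF3Term a₁ a₂ b₁ b₂ c x 1 (i, j) :=
    fun i => (((hrow i).of_norm).mul_left (uu a₁ b₁ c x i)).congr
      (fun j => (hterm' i j).symm)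
  rw [appellF3, Summable.tsum_prod' hsum hrowsum]
  have nΓa : Complex.Gamma (c-a₂) ≠ 0 := Complex.Gamma_ne_zero hca
  have nΓb : Complex.Gamma (c-b₂) ≠ 0 := Complex.Gamma_ne_zero hcb
  have hinner : ∀ i : ℕ, ∑' j, appellF3Term a₁ a₂ b₁ b₂ c x 1 (i, j)
      = (Complex.Gamma c * Complex.Gamma (c-a₂-b₂) /
          (Complex.Gamma (c-a₂) * Complex.Gamma (c-b₂))) *
        (poch a₁ i * poch b₁ i * poch (c-a₂-b₂) i /
          (poch (c-a₂) i * poch (c-b₂) i * (Nat.factorial i : ℂ)) * x^i) := by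
    intro i
    have h1 : ∑' j, appellF3Term a₁ a₂ b₁ b₂ c x 1 (i, j)
        = uu a₁ b₁ c x i * ∑' j, gaussTerm a₂ b₂ (c+i) j := by
      rw [tsum_congr (fun j => hterm' i j), tsum_mul_left]
    rw [h1, hval i]
    have g1 : Complex.Gamma (c + i) = poch c i * Complex.Gamma c := Gamma_shift c hc' i
    have g2 : Complex.Gamma ((c+i) - a₂ - b₂)
        = poch (c-a₂-b₂) i * Complex.Gamma (c-a₂-b₂) := by
      rw [show (c+i) - a₂ - b₂ = (c-a₂-b₂) + i by ring]
      exact Gamma_shift _ hcab' i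
    have g3 : Complex.Gamma ((c+i) - a₂) = poch (c-a₂) i * Complex.Gamma (c-a₂) := by
      rw [show (c+i) - a₂ = (c-a₂) + i by ring]
      exact Gamma_shift _ hca' i
    have g4 : Complex.Gamma ((c+i) - b₂) = poch (c-b₂) i * Complex.Gamma (c-b₂) := by
      rw [show (c+i) - b₂ = (c-b₂) + i by ring]
      exact Gamma_shift _ hcb' i
    rw [uu, g1, g2, g3, g4]
    have np1 : poch c i ≠ 0 := poch_ne_zero hc' i
    have np2 : poch (c-a₂) i ≠ 0 := poch_ne_zero hca' i
    have np3 : poch (c-b₂) i ≠ 0 := poch_ne_zero hcb' i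
    have nf : (Nat.factorial i : ℂ) ≠ 0 := Nat.cast_ne_zero.2 (Nat.factorial_ne_zero i)
    field_simp
  rw [tsum_congr hinner, tsum_mul_left, hyp3F2]
end

section
/- For every natural number n, the limit as ε → 0 (through nonzero real values near 0) of the ratio of Pochhammer symbols (ε−n)_{2n+1} / (2ε−2n)_{2n+1} equals (−1)^n (n!)² / (2·(2n)!), which moreover equals (−1)^n n! / (2^{2n+1} (1/2)_n). -/
open Topology Filter

/-- Pochhammer symbol `(x)_k = ∏_{i=0}^{k-1} (x + i)` for a real number `x`. -/
noncomputable def pochR (x : ℝ) (k : ℕ) : ℝ := ∏ i ∈ Finset.range k, (x + i)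

lemma prod_succ_fact (n : ℕ) : ∏ i ∈ Finset.range n, ((i : ℝ) + 1) = Nat.factorial n := by
  induction n with
  | zero => simp
  | succ n ih =>
    rw [Finset.prod_range_succ, ih]
    push_cast [Nat.factorial_succ]
    ring

lemma prod_sub_nat (n : ℕ) :
    ∏ i ∈ Finset.range n, ((i : ℝ) - n) = (-1) ^ n * Nat.factorial n := by
  rw [← Finset.prod_range_reflect]
  have h : ∀ i ∈ Finset.range n, ((n - 1 - i : ℕ) : ℝ) - n = (-1) * ((i : ℝ) + 1) := by
    intro i hi
    have hi' := Finset.mem_range.mp hi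
    have h1 : (n - 1 - i : ℕ) = n - (i + 1) := by omega
    rw [h1, Nat.cast_sub (by omega)]
    push_cast
    ring
  rw [Finset.prod_congr rfl h, Finset.prod_mul_distrib, Finset.prod_const,
    Finset.card_range, prod_succ_fact]

lemma poch_half (n : ℕ) :
    pochR (1 / 2) n = (Nat.factorial (2 * n) : ℝ) / (4 ^ n * Nat.factorial n) := by
  induction n with
  | zero => simp [pochR]
  | succ n ih =>
    have h2 : 2 * (n + 1) = (2 * n + 1) + 1 := by ring
    rw [pochR, Finset.prod_range_succ, ← pochR, ih, h2, Nat.factorial_succ, Nat.factorial_succ,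
      Nat.factorial_succ]
    have h4 : ((Nat.factorial n : ℝ)) ≠ 0 := Nat.cast_ne_zero.mpr (Nat.factorial_ne_zero n)
    have h5 : ((Nat.factorial (2 * n) : ℝ)) ≠ 0 := Nat.cast_ne_zero.mpr (Nat.factorial_ne_zero _)
    have h6 : (4 : ℝ) ^ n ≠ 0 := by positivity
    field_simp
    push_cast
    ring

theorem stmt_18 (n : ℕ) :
    Tendsto (fun ε : ℝ => pochR (ε - n) (2 * n + 1) / pochR (2 * ε - 2 * n) (2 * n + 1))
      (𝓝[≠] 0)
      (𝓝 ((-1) ^ n * (Nat.factorial n : ℝ) ^ 2 / (2 * (Nat.factorial (2 * n) : ℝ)))) ∧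
    (-1) ^ n * (Nat.factorial n : ℝ) ^ 2 / (2 * (Nat.factorial (2 * n) : ℝ)) =
      (-1) ^ n * (Nat.factorial n : ℝ) / (2 ^ (2 * n + 1) * pochR (1 / 2) n) := by
  set P : ℝ → ℝ := fun ε => ∏ i ∈ Finset.range n, (ε - n + i) with hP
  set Q : ℝ → ℝ := fun ε => ∏ i ∈ Finset.range n, (ε + ((i : ℝ) + 1)) with hQ
  set R : ℝ → ℝ := fun ε => ∏ i ∈ Finset.range (2 * n), (2 * ε - 2 * n + i) with hR
  have hnum : ∀ ε : ℝ, pochR (ε - n) (2 * n + 1) = (P ε * Q ε) * ε := by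
    intro ε
    have hsplit : 2 * n + 1 = n + (n + 1) := by ring
    rw [pochR, hsplit, Finset.prod_range_add, Finset.prod_range_succ']
    have : ∀ i ∈ Finset.range n, (ε - n + ((n + (i + 1) : ℕ) : ℝ)) = ε + ((i : ℝ) + 1) := by
      intro i _; push_cast; ring
    rw [Finset.prod_congr rfl this]
    have h0 : ε - (n : ℝ) + ((n + 0 : ℕ) : ℝ) = ε := by push_cast; ring
    rw [h0]
    simp only [hP, hQ]
    ring
  have hden : ∀ ε : ℝ, pochR (2 * ε - 2 * n) (2 * n + 1) = (2 * R ε) * ε := by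
    intro ε
    rw [pochR, Finset.prod_range_succ]
    have h0 : 2 * ε - 2 * (n : ℝ) + ((2 * n : ℕ) : ℝ) = 2 * ε := by push_cast; ring
    rw [h0]
    show R ε * (2 * ε) = 2 * R ε * ε
    ring
  have heq : ∀ ε : ℝ, ε ≠ 0 →
      pochR (ε - n) (2 * n + 1) / pochR (2 * ε - 2 * n) (2 * n + 1) =
        P ε * Q ε / (2 * R ε) := by
    intro ε hε
    rw [hnum, hden, mul_div_mul_right _ _ hε]
  have hP0 : P 0 = (-1) ^ n * Nat.factorial n := by
    rw [hP]
    simp only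
    rw [Finset.prod_congr rfl (fun i _ => by ring : ∀ i ∈ Finset.range n,
      ((0 : ℝ) - n + i) = (i : ℝ) - n), prod_sub_nat]
  have hQ0 : Q 0 = Nat.factorial n := by
    rw [hQ]
    simp only
    rw [Finset.prod_congr rfl (fun i _ => by ring : ∀ i ∈ Finset.range n,
      ((0 : ℝ) + ((i : ℝ) + 1)) = (i : ℝ) + 1), prod_succ_fact]
  have hR0 : R 0 = Nat.factorial (2 * n) := by
    rw [hR]
    simp only
    rw [Finset.prod_congr rfl (fun i _ => by push_cast; ring : ∀ i ∈ Finset.range (2 * n),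
      (2 * (0 : ℝ) - 2 * n + i) = (i : ℝ) - (2 * n : ℕ)), prod_sub_nat]
    rw [pow_mul]
    norm_num
  have hfact2n : ((Nat.factorial (2 * n) : ℝ)) ≠ 0 := Nat.cast_ne_zero.mpr (Nat.factorial_ne_zero _)
  constructor
  · have hcont : Tendsto (fun ε : ℝ => P ε * Q ε / (2 * R ε)) (𝓝 0)
        (𝓝 (P 0 * Q 0 / (2 * R 0))) := by
      apply Tendsto.div
      · exact ((Continuous.mul (by fun_prop) (by fun_prop)).tendsto 0)
      · exact ((continuous_const.mul (by fun_prop)).tendsto 0)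
      · rw [hR0]
        positivity
    have hval : P 0 * Q 0 / (2 * R 0) =
        (-1) ^ n * (Nat.factorial n : ℝ) ^ 2 / (2 * (Nat.factorial (2 * n) : ℝ)) := by
      rw [hP0, hQ0, hR0]; ring
    rw [hval] at hcont
    refine Tendsto.congr' ?_ (hcont.mono_left nhdsWithin_le_nhds)
    filter_upwards [self_mem_nhdsWithin] with ε hε
    exact (heq ε hε).symm
  · rw [poch_half]
    have hfn : ((Nat.factorial n : ℝ)) ≠ 0 := Nat.cast_ne_zero.mpr (Nat.factorial_ne_zero n)
    have h4 : (4 : ℝ) ^ n = 2 ^ (2 * n) := by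
      rw [show (4 : ℝ) = 2 ^ 2 by norm_num, ← pow_mul]
    rw [h4]
    field_simp
    ring
end
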